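/- Let Y ∈ ℝ^{N×T}, let Ω ⊆ {1,…,N}×{1,…,T}, and let λ*, λ1 > 0. Let X̄, Ō ∈ ℝ^{N×T} with Ō_{n,t} = 0 for all (n,t) ∉ Ω, and set R = P_Ω(Y − X̄ − Ō). Suppose that (i) the spectral norm satisfies ‖R‖₂ ≤ λ*, (ii) ⟨R, X̄⟩ = λ*‖X̄‖_*, (iii) |R_{n,t}| ≤ λ1 for every (n,t), and (iv) R_{n,t} = λ1·sign(Ō_{n,t}) for every (n,t) with Ō_{n,t} ≠ 0. Then (X̄, Ō) is a global minimizer of the PCP objective, i.e., (1/2)‖P_Ω(Y−X̄−Ō)‖_F² + λ*‖X̄‖_* + λ1‖Ō‖₁ ≤ (1/2)‖P_Ω(Y−X−O)‖_F² + λ*‖X‖_* + λ1‖O‖₁ for all X, O ∈ ℝ^{N×T}. -/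

import Mathlib

open Matrix

lemma transpose_mul_self_isHermitian {N T : ℕ} (X : Matrix (Fin N) (Fin T) ℝ) :
    (Xᵀ * X).IsHermitian := by
  have := Matrix.isHermitian_conjTranspose_mul_self X
  first
  | simpa [Matrix.conjTranspose_eq_transpose_of_trivial] using this
  | simpa [Matrix.conjTranspose, Matrix.map, starRingEnd_apply, star_trivial] using this

/-- Nuclear norm: sum of singular values (square roots of eigenvalues of `XᵀX`). -/
noncomputable def nuclearNorm {N T : ℕ} (X : Matrix (Fin N) (Fin T) ℝ) : ℝ :=
  ∑ i, Real.sqrt ((transpose_mul_self_isHermitian X).eigenvalues i)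

/-- Frobenius norm `‖X‖_F = √(trace (XᵀX))`. -/
noncomputable def frobeniusNorm {N T : ℕ} (X : Matrix (Fin N) (Fin T) ℝ) : ℝ :=
  Real.sqrt (Matrix.trace (Xᵀ * X))

/-- Entrywise ℓ1-norm `‖X‖₁ = ∑_{n,t} |x_{nt}|`. -/
noncomputable def l1Norm {N T : ℕ} (X : Matrix (Fin N) (Fin T) ℝ) : ℝ :=
  ∑ n, ∑ t, |X n t|

/-- Sampling operator `P_Ω`: keeps entries indexed by `Ω` and zeroes out the rest. -/
def sampling {N T : ℕ} (Ω : Finset (Fin N × Fin T)) (X : Matrix (Fin N) (Fin T) ℝ) :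
    Matrix (Fin N) (Fin T) ℝ :=
  fun n t => if (n, t) ∈ Ω then X n t else 0

/-- The PCP objective `f(X,O) = (1/2)‖P_Ω(Y−X−O)‖_F² + λ*‖X‖_* + λ1‖O‖₁`. -/
noncomputable def pcpObjective {N T : ℕ} (Ω : Finset (Fin N × Fin T))
    (Y : Matrix (Fin N) (Fin T) ℝ) (lamStar lam1 : ℝ)
    (X O : Matrix (Fin N) (Fin T) ℝ) : ℝ :=
  (1 / 2) * frobeniusNorm (sampling Ω (Y - X - O)) ^ 2 +
    lamStar * nuclearNorm X + lam1 * l1Norm O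

/-- Spectral norm: largest singular value of `X`. -/
noncomputable def matSpectralNorm {N T : ℕ} (X : Matrix (Fin N) (Fin T) ℝ) : ℝ :=
  ⨆ i, Real.sqrt ((transpose_mul_self_isHermitian X).eigenvalues i)

/-- Frobenius inner product `⟨A,B⟩ = trace(AᵀB)`. -/
noncomputable def frobInner {N T : ℕ} (A B : Matrix (Fin N) (Fin T) ℝ) : ℝ :=
  Matrix.trace (Aᵀ * B)

/-! ### Auxiliary lemmas -/

section aux
variable {N T : ℕ}

lemma psd_TXX (X : Matrix (Fin N) (Fin T) ℝ) : (Xᵀ * X).PosSemidef := by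
  have := Matrix.posSemidef_conjTranspose_mul_self X
  simpa [Matrix.conjTranspose_eq_transpose_of_trivial] using this

lemma eig_nonneg (X : Matrix (Fin N) (Fin T) ℝ) (i : Fin T) :
    0 ≤ (transpose_mul_self_isHermitian X).eigenvalues i :=
  (psd_TXX X).eigenvalues_nonneg i

lemma matSpectralNorm_nonneg (R : Matrix (Fin N) (Fin T) ℝ) : 0 ≤ matSpectralNorm R :=
  Real.iSup_nonneg fun _ => Real.sqrt_nonneg _

lemma nuclearNorm_nonneg (X : Matrix (Fin N) (Fin T) ℝ) : 0 ≤ nuclearNorm X :=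
  Finset.sum_nonneg fun _ _ => Real.sqrt_nonneg _

lemma eig_le_sq_spectralNorm (R : Matrix (Fin N) (Fin T) ℝ) (i : Fin T) :
    (transpose_mul_self_isHermitian R).eigenvalues i ≤ matSpectralNorm R ^ 2 := by
  have h1 : Real.sqrt ((transpose_mul_self_isHermitian R).eigenvalues i) ≤ matSpectralNorm R := by
    have : matSpectralNorm R = ⨆ j, Real.sqrt ((transpose_mul_self_isHermitian R).eigenvalues j) := rfl
    rw [this]
    exact le_ciSup (f := fun j => Real.sqrt ((transpose_mul_self_isHermitian R).eigenvalues j))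
      (Set.Finite.bddAbove (Set.finite_range _)) i
  have h2 := Real.sqrt_nonneg ((transpose_mul_self_isHermitian R).eigenvalues i)
  calc (transpose_mul_self_isHermitian R).eigenvalues i
      = Real.sqrt ((transpose_mul_self_isHermitian R).eigenvalues i) ^ 2 :=
        (Real.sq_sqrt (eig_nonneg R i)).symm
    _ ≤ matSpectralNorm R ^ 2 := by nlinarith

lemma unitary_mul_transpose (B : Matrix (Fin T) (Fin T) ℝ) (hB : B.IsHermitian) :
    (hB.eigenvectorUnitary : Matrix (Fin T) (Fin T) ℝ)
      * (hB.eigenvectorUnitary : Matrix (Fin T) (Fin T) ℝ)ᵀ = 1 := by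
  have := Unitary.coe_mul_star_self hB.eigenvectorUnitary
  simpa [Matrix.star_eq_conjTranspose, Matrix.conjTranspose_eq_transpose_of_trivial] using this

lemma spectral_decomp (B : Matrix (Fin T) (Fin T) ℝ) (hB : B.IsHermitian) :
    B = (hB.eigenvectorUnitary : Matrix (Fin T) (Fin T) ℝ) * Matrix.diagonal hB.eigenvalues
      * (hB.eigenvectorUnitary : Matrix (Fin T) (Fin T) ℝ)ᵀ := by
  have := hB.spectral_theorem
  simpa [Matrix.star_eq_conjTranspose, Matrix.conjTranspose_eq_transpose_of_trivial,
    Function.comp] using this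

lemma quad_form_eq (B : Matrix (Fin T) (Fin T) ℝ) (hB : B.IsHermitian) (v : Fin T → ℝ) :
    v ⬝ᵥ (B *ᵥ v) =
      ∑ j, hB.eigenvalues j
        * (((hB.eigenvectorUnitary : Matrix (Fin T) (Fin T) ℝ)ᵀ *ᵥ v) j) ^ 2 := by
  set W : Matrix (Fin T) (Fin T) ℝ := (hB.eigenvectorUnitary : Matrix (Fin T) (Fin T) ℝ) with hW
  have e1 : W *ᵥ (Matrix.diagonal hB.eigenvalues *ᵥ (Wᵀ *ᵥ v)) = B *ᵥ v := by
    rw [Matrix.mulVec_mulVec, Matrix.mulVec_mulVec, ← spectral_decomp _ hB]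
  rw [← e1, Matrix.dotProduct_mulVec, ← Matrix.mulVec_transpose]
  simp only [dotProduct, Matrix.mulVec_diagonal]
  exact Finset.sum_congr rfl fun j _ => by ring

lemma dot_unit_transform (B : Matrix (Fin T) (Fin T) ℝ) (hB : B.IsHermitian) (v : Fin T → ℝ) :
    ((hB.eigenvectorUnitary : Matrix (Fin T) (Fin T) ℝ)ᵀ *ᵥ v) ⬝ᵥ
      ((hB.eigenvectorUnitary : Matrix (Fin T) (Fin T) ℝ)ᵀ *ᵥ v) = v ⬝ᵥ v := by
  rw [Matrix.dotProduct_mulVec, Matrix.vecMul_transpose, Matrix.mulVec_mulVec,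
    unitary_mul_transpose _ hB, Matrix.one_mulVec]

/-- Rayleigh-type bound: `‖Rv‖² ≤ ‖R‖₂² ‖v‖²`. -/
lemma rayleigh (R : Matrix (Fin N) (Fin T) ℝ) (v : Fin T → ℝ) :
    (R *ᵥ v) ⬝ᵥ (R *ᵥ v) ≤ matSpectralNorm R ^ 2 * (v ⬝ᵥ v) := by
  have hC := transpose_mul_self_isHermitian R
  have key : (R *ᵥ v) ⬝ᵥ (R *ᵥ v) = v ⬝ᵥ ((Rᵀ * R) *ᵥ v) := by
    rw [← Matrix.mulVec_mulVec, Matrix.dotProduct_mulVec v, Matrix.vecMul_transpose]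
  set a : Fin T → ℝ := (hC.eigenvectorUnitary : Matrix (Fin T) (Fin T) ℝ)ᵀ *ᵥ v with ha
  rw [key, quad_form_eq _ hC, ← dot_unit_transform _ hC v]
  calc ∑ j, hC.eigenvalues j * a j ^ 2 ≤ ∑ j, matSpectralNorm R ^ 2 * a j ^ 2 :=
        Finset.sum_le_sum fun j _ =>
          mul_le_mul_of_nonneg_right (eig_le_sq_spectralNorm R j) (sq_nonneg _)
    _ = matSpectralNorm R ^ 2 * (a ⬝ᵥ a) := by
        simp [dotProduct, Finset.mul_sum, sq, mul_assoc]

lemma dot_aux (R X : Matrix (Fin N) (Fin T) ℝ) (v : Fin T → ℝ) :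
    v ⬝ᵥ ((Rᵀ * X) *ᵥ v) = (R *ᵥ v) ⬝ᵥ (X *ᵥ v) := by
  rw [← Matrix.mulVec_mulVec, Matrix.dotProduct_mulVec v, Matrix.vecMul_transpose]

lemma trace_eq_sum_cols (M V : Matrix (Fin T) (Fin T) ℝ) (hV : V * Vᵀ = 1) :
    Matrix.trace M = ∑ i, (fun n => V n i) ⬝ᵥ (M *ᵥ fun n => V n i) := by
  have : ∑ i, (fun n => V n i) ⬝ᵥ (M *ᵥ fun n => V n i)
      = ∑ j, ∑ k, M j k * (V * Vᵀ) j k := by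
    simp only [dotProduct, Matrix.mulVec, Matrix.mul_apply, Matrix.transpose_apply,
      Finset.mul_sum, Finset.sum_mul]
    rw [Finset.sum_comm]
    refine Finset.sum_congr rfl fun j _ => ?_
    rw [Finset.sum_comm]
    refine Finset.sum_congr rfl fun k _ => Finset.sum_congr rfl fun i _ => by ring
  rw [this, hV]
  simp [Matrix.one_apply, Matrix.trace, Matrix.diag, Finset.sum_ite_eq]

/-- Trace duality: `⟨R, X⟩ ≤ ‖R‖₂ ‖X‖₊`. -/
lemma trace_duality (R X : Matrix (Fin N) (Fin T) ℝ) :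
    frobInner R X ≤ matSpectralNorm R * nuclearNorm X := by
  classical
  have hB := transpose_mul_self_isHermitian X
  set V : Matrix (Fin T) (Fin T) ℝ := (hB.eigenvectorUnitary : Matrix (Fin T) (Fin T) ℝ) with hVdef
  have hVVt : V * Vᵀ = 1 := unitary_mul_transpose _ hB
  have hVtV : Vᵀ * V = 1 := by
    have := Unitary.coe_star_mul_self hB.eigenvectorUnitary
    simpa [Matrix.star_eq_conjTranspose, Matrix.conjTranspose_eq_transpose_of_trivial] using this
  have hcol : ∀ i : Fin T, (fun n => V n i) = ⇑(hB.eigenvectorBasis i) := fun i =>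
    funext fun n => hB.eigenvectorUnitary_apply n i
  have hunit : ∀ i : Fin T, (fun n => V n i) ⬝ᵥ (fun n => V n i) = 1 := by
    intro i
    have h2 : (Vᵀ * V) i i = (1 : Matrix (Fin T) (Fin T) ℝ) i i := by rw [hVtV]
    simpa [Matrix.mul_apply, Matrix.transpose_apply, Matrix.one_apply, dotProduct] using h2
  have hXv : ∀ i : Fin T, (X *ᵥ fun n => V n i) ⬝ᵥ (X *ᵥ fun n => V n i)
      = hB.eigenvalues i := by
    intro i
    rw [← dot_aux]
    rw [hcol i, hB.mulVec_eigenvectorBasis i]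
    rw [dotProduct_smul, smul_eq_mul, ← hcol i, hunit i, mul_one]
  have hRv : ∀ i : Fin T, Real.sqrt ((R *ᵥ fun n => V n i) ⬝ᵥ (R *ᵥ fun n => V n i))
      ≤ matSpectralNorm R := by
    intro i
    have := rayleigh R (fun n => V n i)
    rw [hunit i, mul_one] at this
    calc Real.sqrt ((R *ᵥ fun n => V n i) ⬝ᵥ (R *ᵥ fun n => V n i))
        ≤ Real.sqrt (matSpectralNorm R ^ 2) := Real.sqrt_le_sqrt this
      _ = matSpectralNorm R := Real.sqrt_sq (matSpectralNorm_nonneg R)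
  have h1 : frobInner R X = ∑ i, (R *ᵥ fun n => V n i) ⬝ᵥ (X *ᵥ fun n => V n i) := by
    rw [frobInner, trace_eq_sum_cols (Rᵀ * X) V hVVt]
    exact Finset.sum_congr rfl fun i _ => dot_aux R X _
  rw [h1, nuclearNorm, Finset.mul_sum]
  refine Finset.sum_le_sum fun i _ => ?_
  have cs : (R *ᵥ fun n => V n i) ⬝ᵥ (X *ᵥ fun n => V n i)
      ≤ Real.sqrt ((R *ᵥ fun n => V n i) ⬝ᵥ (R *ᵥ fun n => V n i))
        * Real.sqrt ((X *ᵥ fun n => V n i) ⬝ᵥ (X *ᵥ fun n => V n i)) := by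
    have := Real.sum_mul_le_sqrt_mul_sqrt Finset.univ
      (fun n => (R *ᵥ fun m => V m i) n) (fun n => (X *ᵥ fun m => V m i) n)
    simpa [dotProduct, sq] using this
  calc (R *ᵥ fun n => V n i) ⬝ᵥ (X *ᵥ fun n => V n i)
      ≤ Real.sqrt ((R *ᵥ fun n => V n i) ⬝ᵥ (R *ᵥ fun n => V n i))
        * Real.sqrt ((X *ᵥ fun n => V n i) ⬝ᵥ (X *ᵥ fun n => V n i)) := cs
    _ ≤ matSpectralNorm R * Real.sqrt ((X *ᵥ fun n => V n i) ⬝ᵥ (X *ᵥ fun n => V n i)) :=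
        mul_le_mul_of_nonneg_right (hRv i) (Real.sqrt_nonneg _)
    _ = matSpectralNorm R * Real.sqrt (hB.eigenvalues i) := by rw [hXv i]

lemma frobInner_eq_sum (A B : Matrix (Fin N) (Fin T) ℝ) :
    frobInner A B = ∑ n, ∑ t, A n t * B n t := by
  rw [frobInner, Matrix.trace]
  simp only [Matrix.diag, Matrix.mul_apply, Matrix.transpose_apply]
  rw [Finset.sum_comm]

lemma frobSq_eq_sum (A : Matrix (Fin N) (Fin T) ℝ) :
    frobeniusNorm A ^ 2 = ∑ n, ∑ t, A n t ^ 2 := by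
  have h : Matrix.trace (Aᵀ * A) = ∑ n, ∑ t, A n t ^ 2 := by
    rw [Matrix.trace]
    simp only [Matrix.diag, Matrix.mul_apply, Matrix.transpose_apply, sq]
    rw [Finset.sum_comm]
  rw [frobeniusNorm, Real.sq_sqrt, h]
  rw [h]
  exact Finset.sum_nonneg fun n _ => Finset.sum_nonneg fun t _ => sq_nonneg _
end aux

/-- sufficient optimality conditions for PCP. If `Ō` vanishes off `Ω`,
`R = P_Ω(Y − X̄ − Ō)` satisfies `‖R‖₂ ≤ λ*`, `⟨R, X̄⟩ = λ*‖X̄‖_*`, `|R_{n,t}| ≤ λ1`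
everywhere and `R_{n,t} = λ1·sign(Ō_{n,t})` on the support of `Ō`, then `(X̄, Ō)` globally
minimizes the PCP objective. -/
theorem pcp_sufficient_optimality {N T : ℕ} (Ω : Finset (Fin N × Fin T))
    (Y : Matrix (Fin N) (Fin T) ℝ) (lamStar lam1 : ℝ)
    (hlamStar : 0 < lamStar) (hlam1 : 0 < lam1)
    (Xbar Obar : Matrix (Fin N) (Fin T) ℝ)
    (hOsupp : ∀ (n : Fin N) (t : Fin T), (n, t) ∉ Ω → Obar n t = 0)
    (hspec : matSpectralNorm (sampling Ω (Y - Xbar - Obar)) ≤ lamStar)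
    (hinner : frobInner (sampling Ω (Y - Xbar - Obar)) Xbar = lamStar * nuclearNorm Xbar)
    (hbound : ∀ (n : Fin N) (t : Fin T), |sampling Ω (Y - Xbar - Obar) n t| ≤ lam1)
    (hsign : ∀ (n : Fin N) (t : Fin T), Obar n t ≠ 0 →
      sampling Ω (Y - Xbar - Obar) n t = lam1 * Real.sign (Obar n t)) :
    ∀ X O : Matrix (Fin N) (Fin T) ℝ,
      pcpObjective Ω Y lamStar lam1 Xbar Obar ≤ pcpObjective Ω Y lamStar lam1 X O := by
  classical
  intro X O
  set R : Matrix (Fin N) (Fin T) ℝ := sampling Ω (Y - Xbar - Obar) with hRdef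
  set Δ : Matrix (Fin N) (Fin T) ℝ := (Xbar - X) + (Obar - O) with hΔdef
  set M : Matrix (Fin N) (Fin T) ℝ := sampling Ω Δ with hMdef
  have hD : sampling Ω (Y - X - O) = R + M := by
    ext n t
    by_cases h : (n, t) ∈ Ω <;>
      simp [hRdef, hMdef, hΔdef, sampling, h, Matrix.sub_apply, Matrix.add_apply] <;> ring
  -- quadratic term lower bound
  have hquad : frobeniusNorm R ^ 2 + 2 * (∑ n, ∑ t, R n t * M n t)
      ≤ frobeniusNorm (sampling Ω (Y - X - O)) ^ 2 := by
    rw [hD, frobSq_eq_sum, frobSq_eq_sum]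
    simp only [Finset.mul_sum]
    rw [← Finset.sum_add_distrib]
    refine Finset.sum_le_sum fun n _ => ?_
    rw [← Finset.sum_add_distrib]
    refine Finset.sum_le_sum fun t _ => ?_
    have : (R + M) n t = R n t + M n t := rfl
    rw [this]
    nlinarith [sq_nonneg (M n t)]
  -- ⟨R, M⟩ = ⟨R, Δ⟩
  have hRM : (∑ n, ∑ t, R n t * M n t) = ∑ n, ∑ t, R n t * Δ n t := by
    refine Finset.sum_congr rfl fun n _ => Finset.sum_congr rfl fun t _ => ?_
    by_cases h : (n, t) ∈ Ω <;> simp [hMdef, hRdef, sampling, h]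
  -- split ⟨R, Δ⟩
  have hsplit : (∑ n, ∑ t, R n t * Δ n t)
      = frobInner R Xbar - frobInner R X + frobInner R Obar - frobInner R O := by
    simp only [frobInner_eq_sum, hΔdef, Matrix.add_apply, Matrix.sub_apply, mul_add, mul_sub,
      Finset.sum_add_distrib, Finset.sum_sub_distrib]
    ring
  -- ⟨R, Obar⟩ = lam1 * ‖Obar‖₁
  have hRObar : frobInner R Obar = lam1 * l1Norm Obar := by
    rw [frobInner_eq_sum, l1Norm, Finset.mul_sum]
    refine Finset.sum_congr rfl fun n _ => ?_
    rw [Finset.mul_sum]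
    refine Finset.sum_congr rfl fun t _ => ?_
    by_cases h0 : Obar n t = 0
    · simp [h0]
    · rw [hsign n t h0]
      rcases lt_trichotomy (Obar n t) 0 with hlt | heq | hgt
      · rw [Real.sign_of_neg hlt, abs_of_neg hlt]; ring
      · exact absurd heq h0
      · rw [Real.sign_of_pos hgt, abs_of_pos hgt]; ring
  -- ⟨R, X⟩ ≤ lamStar * ‖X‖₊
  have hRX : frobInner R X ≤ lamStar * nuclearNorm X :=
    (trace_duality R X).trans
      (mul_le_mul_of_nonneg_right hspec (nuclearNorm_nonneg X))
  -- ⟨R, O⟩ ≤ lam1 * ‖O‖₁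
  have hRO : frobInner R O ≤ lam1 * l1Norm O := by
    rw [frobInner_eq_sum, l1Norm, Finset.mul_sum]
    refine Finset.sum_le_sum fun n _ => ?_
    rw [Finset.mul_sum]
    refine Finset.sum_le_sum fun t _ => ?_
    calc R n t * O n t ≤ |R n t * O n t| := le_abs_self _
      _ = |R n t| * |O n t| := abs_mul _ _
      _ ≤ lam1 * |O n t| := mul_le_mul_of_nonneg_right (hbound n t) (abs_nonneg _)
  unfold pcpObjective
  rw [hRM, hsplit] at hquad
  linarith [hquad, hRX, hRO, hRObar, hinner]
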